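/- Let H ∈ F_2^{m×n} be a parity check matrix such that every submatrix formed by at least n/3 columns of H has rank at least s, and let f be the characteristic function of the linear code defined by H. Let r = ρ₁ ∧ ρ₂ be a balanced rectangle over the n variables with r ≤ f (every model of r is a model of f). Then |r⁻¹(1)| ≤ 2^{n−2s}. -/

import Mathlib

open Module

/-- Cardinality bound for the kernel of `mulVecLin` of a matrix of rank at least `s`. -/
lemma ker_card_le_aux {m s : ℕ} {ι : Type*} [Fintype ι]
    (M : Matrix (Fin m) ι (ZMod 2)) (h : s ≤ M.rank) :
    Nat.card (LinearMap.ker M.mulVecLin) ≤ 2 ^ (Fintype.card ι - s) := by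
  have : Fintype (LinearMap.ker M.mulVecLin) := Fintype.ofFinite _
  have hcard : Fintype.card (LinearMap.ker M.mulVecLin)
      = 2 ^ finrank (ZMod 2) (LinearMap.ker M.mulVecLin) := by
    have := card_eq_pow_finrank (K := ZMod 2) (V := LinearMap.ker M.mulVecLin)
    simpa [ZMod.card] using this
  have hrn := LinearMap.finrank_range_add_finrank_ker M.mulVecLin
  rw [Module.finrank_fintype_fun_eq_card] at hrn
  have hker : finrank (ZMod 2) (LinearMap.ker M.mulVecLin) ≤ Fintype.card ι - s := by
    have : M.rank + finrank (ZMod 2) (LinearMap.ker M.mulVecLin) = Fintype.card ι := hrn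
    omega
  rw [Nat.card_eq_fintype_card, hcard]
  exact Nat.pow_le_pow_right (by norm_num) hker

/-- If every submatrix of `H` formed by at least `n/3` columns has rank at least
`s`, and `r = ρ₁ ∧ ρ₂` is a balanced rectangle entailing the characteristic
function of the linear code of `H`, then `r` has at most `2^(n−2s)` models. -/
theorem balanced_rectangle_in_code_small (m n s : ℕ)
    (H : Matrix (Fin m) (Fin n) (ZMod 2))
    (hgood : ∀ S : Finset (Fin n), 3 * S.card ≥ n →
      (H.submatrix id (Subtype.val : {j // j ∈ S} → Fin n)).rank ≥ s)
    (X₁ : Finset (Fin n)) (ρ₁ ρ₂ : (Fin n → ZMod 2) → Bool)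
    (hbal₁ : n ≤ 3 * X₁.card) (hbal₂ : 3 * X₁.card ≤ 2 * n)
    (hdep₁ : ∀ x y, (∀ i ∈ X₁, x i = y i) → ρ₁ x = ρ₁ y)
    (hdep₂ : ∀ x y, (∀ i ∉ X₁, x i = y i) → ρ₂ x = ρ₂ y)
    (hent : ∀ x, ρ₁ x = true → ρ₂ x = true → H.mulVec x = 0) :
    (Finset.univ.filter fun x => ρ₁ x = true ∧ ρ₂ x = true).card ≤ 2 ^ (n - 2 * s) := by
  classical
  set X₂ : Finset (Fin n) := X₁ᶜ with hX₂
  have hcard₂ : X₂.card = n - X₁.card := by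
    simp [hX₂, Finset.card_compl]
  have hle : X₁.card ≤ n := by
    simpa using Finset.card_le_card (Finset.subset_univ X₁)
  -- Empty case
  by_cases hne : ∃ x₀ : Fin n → ZMod 2, ρ₁ x₀ = true ∧ ρ₂ x₀ = true
  swap
  · have : (Finset.univ.filter fun x => ρ₁ x = true ∧ ρ₂ x = true) = ∅ := by
      ext x; simp only [Finset.mem_filter, Finset.mem_univ, true_and, Finset.notMem_empty,
        iff_false]
      intro h; exact hne ⟨x, h⟩
    simp [this]
  obtain ⟨x₀, hx₀1, hx₀2⟩ := hne
  have hHx₀ : H.mulVec x₀ = 0 := hent x₀ hx₀1 hx₀2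
  -- submatrices
  set M₁ := H.submatrix id (Subtype.val : {j // j ∈ X₁} → Fin n) with hM₁
  set M₂ := H.submatrix id (Subtype.val : {j // j ∈ X₂} → Fin n) with hM₂
  have hr₁ : s ≤ M₁.rank := hgood X₁ hbal₁
  have hr₂ : s ≤ M₂.rank := by
    apply hgood X₂
    omega
  -- key: mulVec of a vector supported in S equals mulVec of the restriction
  have key : ∀ (S : Finset (Fin n)) (v : Fin n → ZMod 2), (∀ i ∉ S, v i = 0) →
      (H.submatrix id (Subtype.val : {j // j ∈ S} → Fin n)).mulVec
        (fun j : {j // j ∈ S} => v j) = H.mulVec v := by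
    intro S v hv
    funext i
    simp only [Matrix.mulVec, dotProduct, Matrix.submatrix_apply, id_eq]
    rw [Finset.sum_coe_sort S (fun j => H i j * v j)]
    apply Finset.sum_subset (Finset.subset_univ S)
    intro j _ hj
    simp [hv j hj]
  -- the two kernels
  set K₁ := LinearMap.ker M₁.mulVecLin
  set K₂ := LinearMap.ker M₂.mulVecLin
  -- injection from models into K₁ × K₂
  have hinj : ∀ x ∈ Finset.univ.filter fun x => ρ₁ x = true ∧ ρ₂ x = true,
      ((fun j : {j // j ∈ X₁} => x j - x₀ j) ∈ K₁ ∧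
       (fun j : {j // j ∈ X₂} => x j - x₀ j) ∈ K₂) := by
    intro x hx
    rw [Finset.mem_filter] at hx
    obtain ⟨-, hx1, hx2⟩ := hx
    constructor
    · -- combine x on X₁, x₀ elsewhere
      set y : Fin n → ZMod 2 := fun i => if i ∈ X₁ then x i else x₀ i with hy
      have hy1 : ρ₁ y = true := by
        rw [hdep₁ y x (fun i hi => by simp [hy, hi])]; exact hx1
      have hy2 : ρ₂ y = true := by
        rw [hdep₂ y x₀ (fun i hi => by simp [hy, hi])]; exact hx₀2
      have hHy : H.mulVec y = 0 := hent y hy1 hy2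
      have hsupp : ∀ i ∉ X₁, (y - x₀) i = 0 := by
        intro i hi; simp [hy, hi]
      have := key X₁ (y - x₀) hsupp
      rw [Matrix.mulVec_sub, hHy, hHx₀, sub_zero] at this
      have heq : (fun j : {j // j ∈ X₁} => x j - x₀ j)
          = fun j : {j // j ∈ X₁} => (y - x₀) j.1 := by
        funext j; simp [hy, j.2]
      rw [LinearMap.mem_ker, Matrix.mulVecLin_apply, heq, this]
    · set y : Fin n → ZMod 2 := fun i => if i ∈ X₁ then x₀ i else x i with hy
      have hy1 : ρ₁ y = true := by
        rw [hdep₁ y x₀ (fun i hi => by simp [hy, hi])]; exact hx₀1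
      have hy2 : ρ₂ y = true := by
        rw [hdep₂ y x (fun i hi => by simp [hy, hi])]; exact hx2
      have hHy : H.mulVec y = 0 := hent y hy1 hy2
      have hsupp : ∀ i ∉ X₂, (y - x₀) i = 0 := by
        intro i hi
        have : i ∈ X₁ := by simpa [hX₂] using hi
        simp [hy, this]
      have := key X₂ (y - x₀) hsupp
      rw [Matrix.mulVec_sub, hHy, hHx₀, sub_zero] at this
      have heq : (fun j : {j // j ∈ X₂} => x j - x₀ j)
          = fun j : {j // j ∈ X₂} => (y - x₀) j.1 := by
        funext j
        have : j.1 ∉ X₁ := Finset.mem_compl.mp j.2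
        simp [hy, this]
      rw [LinearMap.mem_ker, Matrix.mulVecLin_apply, heq, this]
  -- now count
  have fin1 : Fintype K₁ := Fintype.ofFinite _
  have fin2 : Fintype K₂ := Fintype.ofFinite _
  set t := (Finset.univ.filter (· ∈ K₁)) ×ˢ (Finset.univ.filter (· ∈ K₂)) with ht
  have hcount : (Finset.univ.filter fun x => ρ₁ x = true ∧ ρ₂ x = true).card ≤ t.card := by
    apply Finset.card_le_card_of_injOn
      (fun x => ((fun j : {j // j ∈ X₁} => x j - x₀ j),
                 (fun j : {j // j ∈ X₂} => x j - x₀ j)))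
    · intro x hx
      obtain ⟨h1, h2⟩ := hinj x hx
      simp only [ht, Finset.mem_coe, Finset.mem_product, Finset.mem_filter, Finset.mem_univ, true_and]
      exact ⟨h1, h2⟩
    · intro x hx y hy hxy
      simp only [Prod.mk.injEq] at hxy
      obtain ⟨h1, h2⟩ := hxy
      funext i
      by_cases hi : i ∈ X₁
      · have := congrFun h1 ⟨i, hi⟩
        simpa [sub_eq_sub_iff_sub_eq_sub] using this
      · have hi2 : i ∈ X₂ := by simpa [hX₂] using hi
        have := congrFun h2 ⟨i, hi2⟩
        simpa [sub_eq_sub_iff_sub_eq_sub] using this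
  have htcard : t.card = Nat.card K₁ * Nat.card K₂ := by
    rw [ht, Finset.card_product]
    congr 1 <;> · rw [← Fintype.card_subtype]
                  convert (Nat.card_eq_fintype_card).symm
  have hb₁ : Nat.card K₁ ≤ 2 ^ (X₁.card - s) := by
    have := ker_card_le_aux M₁ hr₁
    rwa [Fintype.card_coe] at this
  have hb₂ : Nat.card K₂ ≤ 2 ^ (X₂.card - s) := by
    have := ker_card_le_aux M₂ hr₂
    rwa [Fintype.card_coe] at this
  have hs₁ : s ≤ X₁.card := by
    have := M₁.rank_le_card_width
    rw [Fintype.card_coe] at this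
    omega
  have hs₂ : s ≤ X₂.card := by
    have := M₂.rank_le_card_width
    rw [Fintype.card_coe] at this
    omega
  calc (Finset.univ.filter fun x => ρ₁ x = true ∧ ρ₂ x = true).card
      ≤ t.card := hcount
    _ = Nat.card K₁ * Nat.card K₂ := htcard
    _ ≤ 2 ^ (X₁.card - s) * 2 ^ (X₂.card - s) := Nat.mul_le_mul hb₁ hb₂
    _ = 2 ^ (X₁.card - s + (X₂.card - s)) := (pow_add 2 _ _).symm
    _ = 2 ^ (n - 2 * s) := by congr 1; omega
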